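/- Structure of the preimages of the domains Ξ⁺ and Ξ⁻ (Ξ^±K_ℂ = G·K_ℂ·P^±): (a) the set {g ∈ SL(2,ℂ) : g₁₀·i + g₁₁ ≠ 0 and Im((g₀₀·i + g₀₁)/(g₁₀·i + g₁₁)) > 0} equals the product set {u·k·p : u ∈ SL(2,ℝ), k ∈ SO(2,ℂ), p ∈ P⁺}; (b) the set {g ∈ SL(2,ℂ) : g₁₀·(−i) + g₁₁ ≠ 0 and Im((g₀₀·(−i) + g₀₁)/(g₁₀·(−i) + g₁₁)) < 0} equals {u·k·p : u ∈ SL(2,ℝ), k ∈ SO(2,ℂ), p ∈ P⁻}. -/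

import Mathlib

open Matrix

private lemma mobius_row (A B : Matrix (Fin 2) (Fin 2) ℂ) (r : Fin 2) (z : ℂ) :
    (A*B) r 0 * z + (A*B) r 1
      = A r 0 * (B 0 0 * z + B 0 1) + A r 1 * (B 1 0 * z + B 1 1) := by
  simp [Matrix.mul_apply, Fin.sum_univ_two]; ring

private lemma so2_entries (k : Matrix.SpecialLinearGroup (Fin 2) ℂ)
    (hk : (k : Matrix (Fin 2) (Fin 2) ℂ) * (k : Matrix (Fin 2) (Fin 2) ℂ)ᵀ = 1) :
    (k : Matrix (Fin 2) (Fin 2) ℂ) 1 1 = (k : Matrix (Fin 2) (Fin 2) ℂ) 0 0 ∧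
    (k : Matrix (Fin 2) (Fin 2) ℂ) 1 0 = -(k : Matrix (Fin 2) (Fin 2) ℂ) 0 1 := by
  have h00 := congrFun (congrFun hk 0) 0
  have h01 := congrFun (congrFun hk 0) 1
  have hd := k.2
  rw [Matrix.det_fin_two] at hd
  simp [Matrix.mul_apply, Fin.sum_univ_two, Matrix.one_apply] at h00 h01
  set a := (k : Matrix (Fin 2) (Fin 2) ℂ) 0 0
  set b := (k : Matrix (Fin 2) (Fin 2) ℂ) 0 1
  set c := (k : Matrix (Fin 2) (Fin 2) ℂ) 1 0
  set d := (k : Matrix (Fin 2) (Fin 2) ℂ) 1 1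
  constructor
  · linear_combination a * hd + b * h01 - d * h00
  · linear_combination a * h01 - c * h00 - b * hd

private lemma transpose_fin_two' (a b c d : ℂ) : (!![a, b; c, d])ᵀ = !![a, c; b, d] := by
  ext i j'
  fin_cases i <;> fin_cases j' <;> simp

private lemma master (j : ℂ) (hj : j = Complex.I ∨ j = -Complex.I)
    (g : Matrix.SpecialLinearGroup (Fin 2) ℂ) :
    ((g : Matrix (Fin 2) (Fin 2) ℂ) 1 0 * j + (g : Matrix (Fin 2) (Fin 2) ℂ) 1 1 ≠ 0 ∧
      0 < (((g : Matrix (Fin 2) (Fin 2) ℂ) 0 0 * j + (g : Matrix (Fin 2) (Fin 2) ℂ) 0 1) /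
            ((g : Matrix (Fin 2) (Fin 2) ℂ) 1 0 * j +
              (g : Matrix (Fin 2) (Fin 2) ℂ) 1 1)).im * j.im) ↔
    (∃ (u : Matrix.SpecialLinearGroup (Fin 2) ℝ)
        (k p : Matrix.SpecialLinearGroup (Fin 2) ℂ),
        (k : Matrix (Fin 2) (Fin 2) ℂ) * (k : Matrix (Fin 2) (Fin 2) ℂ)ᵀ = 1 ∧
        (∃ z : ℂ, (p : Matrix (Fin 2) (Fin 2) ℂ) =
          !![1 + z, -(j * z); -(j * z), 1 - z]) ∧
        g = Matrix.SpecialLinearGroup.map Complex.ofRealHom u * k * p) := by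
  have hj2 : j ^ 2 = -1 := by rcases hj with rfl | rfl <;> simp [Complex.I_sq]
  have hjre : j.re = 0 := by rcases hj with rfl | rfl <;> simp
  have hjim : j.im * j.im = 1 := by rcases hj with rfl | rfl <;> simp
  have hjimne : j.im ≠ 0 := by rcases hj with rfl | rfl <;> simp
  constructor
  · rintro ⟨hdne, him⟩
    set G := ((g : Matrix.SpecialLinearGroup (Fin 2) ℂ) : Matrix (Fin 2) (Fin 2) ℂ) with hGdef
    set δ := G 1 0 * j + G 1 1 with hδdef
    set w := (G 0 0 * j + G 0 1) / δ with hwdef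
    have hnum : G 0 0 * j + G 0 1 = w * δ := (div_mul_cancel₀ _ hdne).symm
    set x := w.re with hxdef
    set y := w.im * j.im with hydef
    have hy : 0 < y := him
    have hw : w = (x : ℂ) + (y : ℂ) * j := by
      apply Complex.ext
      · simp [Complex.mul_re, hjre]; exact hxdef.symm
      · simp [Complex.mul_im, hjre, hydef]
        linear_combination (-(w.im : ℝ)) * hjim
    clear_value w
    clear hwdef
    set s := Real.sqrt y with hsdef
    have hs : 0 < s := Real.sqrt_pos.mpr hy
    have hsne : s ≠ 0 := ne_of_gt hs
    have hsC : (s : ℂ) ≠ 0 := by exact_mod_cast hsne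
    have hssq : (s : ℂ) * (s : ℂ) = (y : ℂ) := by
      norm_cast
      exact Real.mul_self_sqrt hy.le
    have hsinv : (s : ℂ) * (s : ℂ)⁻¹ = 1 := mul_inv_cancel₀ hsC
    clear_value s x y δ G
    set u : Matrix.SpecialLinearGroup (Fin 2) ℝ :=
      ⟨!![s, x / s; 0, 1 / s], by rw [Matrix.det_fin_two_of]; field_simp; simp⟩ with hu
    have huc : (u : Matrix (Fin 2) (Fin 2) ℝ) = !![s, x / s; 0, 1 / s] := rfl
    set u' := Matrix.SpecialLinearGroup.map Complex.ofRealHom u with hu'def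
    have hu'c : (u' : Matrix (Fin 2) (Fin 2) ℂ) = !![(s : ℂ), (x : ℂ) / s; 0, 1 / (s : ℂ)] := by
      have he : ∀ i j' : Fin 2, (u' : Matrix (Fin 2) (Fin 2) ℂ) i j'
          = (((u : Matrix (Fin 2) (Fin 2) ℝ) i j' : ℝ) : ℂ) := fun _ _ => rfl
      ext i j'
      rw [he, huc]
      fin_cases i <;> fin_cases j' <;> (try simp) <;> (try push_cast) <;> (try ring)
    set v : Matrix.SpecialLinearGroup (Fin 2) ℂ :=
      ⟨!![1 / (s : ℂ), -((x : ℂ) / s); 0, (s : ℂ)], by rw [Matrix.det_fin_two_of]; field_simp; simp⟩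
      with hv
    have hvc : (v : Matrix (Fin 2) (Fin 2) ℂ) = !![1 / (s : ℂ), -((x : ℂ) / s); 0, (s : ℂ)] := rfl
    clear_value u u' v
    have huv : u' * v = 1 := by
      apply Subtype.ext
      show ((u' * v : Matrix.SpecialLinearGroup (Fin 2) ℂ) : Matrix (Fin 2) (Fin 2) ℂ) = 1
      rw [Matrix.SpecialLinearGroup.coe_mul, hu'c, hvc]
      ext i j'
      fin_cases i <;> fin_cases j' <;>
        (try simp [Matrix.mul_apply, Fin.sum_univ_two, Matrix.one_apply]) <;>
        (try field_simp) <;> (try ring)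
    set h := v * g with hhdef
    set H := ((h : Matrix.SpecialLinearGroup (Fin 2) ℂ) : Matrix (Fin 2) (Fin 2) ℂ) with hHdef
    have hHm : H = (v : Matrix (Fin 2) (Fin 2) ℂ) * G := by
      rw [hHdef, hhdef, Matrix.SpecialLinearGroup.coe_mul, hGdef]
    clear_value h H
    have denh : H 1 0 * j + H 1 1 = (s : ℂ) * δ := by
      rw [hHm, mobius_row, hvc, ← hδdef]
      (try simp)
      (try ring)
    have numh : H 0 0 * j + H 0 1 = j * ((s : ℂ) * δ) := by
      rw [hHm, mobius_row, hvc, ← hδdef, hnum]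
      (try simp)
      linear_combination (δ / (s : ℂ)) * hw - (j * δ / (s : ℂ)) * hssq
        + (j * (s : ℂ) * δ) * hsinv
    set δ' := (s : ℂ) * δ with hδ'def
    have hδ'ne : δ' ≠ 0 := mul_ne_zero hsC hdne
    have hinv : δ' * δ'⁻¹ = 1 := mul_inv_cancel₀ hδ'ne
    clear_value δ'
    clear hδ'def
    set α := (δ' + δ'⁻¹) / 2 with hα
    set β := j * (δ' - δ'⁻¹) / 2 with hβ
    clear_value α β
    have hαβ : α ^ 2 + β ^ 2 = 1 := by
      rw [hα, hβ]
      linear_combination ((δ' - δ'⁻¹) ^ 2 / 4) * hj2 + hinv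
    set k : Matrix.SpecialLinearGroup (Fin 2) ℂ :=
      ⟨!![α, β; -β, α], by rw [Matrix.det_fin_two_of]; linear_combination hαβ⟩ with hkdef
    set kinv : Matrix.SpecialLinearGroup (Fin 2) ℂ :=
      ⟨!![α, -β; β, α], by rw [Matrix.det_fin_two_of]; linear_combination hαβ⟩ with hkinvdef
    have hkc : (k : Matrix (Fin 2) (Fin 2) ℂ) = !![α, β; -β, α] := rfl
    have hkinvc : (kinv : Matrix (Fin 2) (Fin 2) ℂ) = !![α, -β; β, α] := rfl
    clear_value k kinv
    have hkk : k * kinv = 1 := by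
      apply Subtype.ext
      show ((k * kinv : Matrix.SpecialLinearGroup (Fin 2) ℂ) : Matrix (Fin 2) (Fin 2) ℂ) = 1
      rw [Matrix.SpecialLinearGroup.coe_mul, hkc, hkinvc]
      ext i j'
      fin_cases i <;> fin_cases j' <;>
        (try simp [Matrix.mul_apply, Fin.sum_univ_two, Matrix.one_apply]) <;>
        (try ring_nf) <;>
        (first
        | rfl
        | linear_combination hαβ
        | linear_combination -hαβ
        | ring1
        | skip)
    have hkT : (k : Matrix (Fin 2) (Fin 2) ℂ) * (k : Matrix (Fin 2) (Fin 2) ℂ)ᵀ = 1 := by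
      rw [hkc, transpose_fin_two']
      ext i j'
      fin_cases i <;> fin_cases j' <;>
        (try simp [Matrix.mul_apply, Fin.sum_univ_two, Matrix.one_apply,
          Matrix.transpose_apply]) <;>
        (try ring_nf) <;>
        (first
        | rfl
        | linear_combination hαβ
        | linear_combination -hαβ
        | ring1
        | skip)
    set P := ((kinv * h : Matrix.SpecialLinearGroup (Fin 2) ℂ) : Matrix (Fin 2) (Fin 2) ℂ)
      with hPdef
    have hPm : P = (kinv : Matrix (Fin 2) (Fin 2) ℂ) * H := by
      rw [hPdef, Matrix.SpecialLinearGroup.coe_mul, hHdef]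
    have hdP : P 0 0 * P 1 1 - P 0 1 * P 1 0 = 1 := by
      have hd2 := (kinv * h).2
      rw [Matrix.det_fin_two] at hd2
      rw [hPdef]
      exact hd2
    clear_value P
    have denP : P 1 0 * j + P 1 1 = 1 := by
      rw [hPm, mobius_row, numh, denh, hkinvc]
      (try simp)
      rw [hα, hβ]
      linear_combination (δ' * (δ' - δ'⁻¹) / 2) * hj2 + hinv
    have numP : P 0 0 * j + P 0 1 = j := by
      rw [hPm, mobius_row, numh, denh, hkinvc]
      (try simp)
      rw [hα, hβ]
      linear_combination j * hinv
    have hP11 : P 1 1 = 1 - P 1 0 * j := by linear_combination denP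
    have hP01 : P 0 1 = j - P 0 0 * j := by linear_combination numP
    rw [hP11, hP01] at hdP
    have hz : P 0 0 - j * P 1 0 = 1 := by linear_combination hdP
    set z := P 0 0 - 1 with hzdef
    clear_value z
    have hP10 : P 1 0 = -(j * z) := by
      linear_combination j * hz + P 1 0 * hj2 + j * hzdef
    have hP00' : P 0 0 = 1 + z := by rw [hzdef]; ring
    have hP01' : P 0 1 = -(j * z) := by rw [hP01, hzdef]; ring
    have hP11' : P 1 1 = 1 - z := by
      rw [hP11, hP10]
      linear_combination z * hj2
    have hpmat : P = !![1 + z, -(j * z); -(j * z), 1 - z] := by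
      rw [Matrix.eta_fin_two P, hP00', hP01', hP10, hP11']
    refine ⟨u, k, kinv * h, hkT, ⟨z, by rw [← hPdef]; exact hpmat⟩, ?_⟩
    have hgr : u' * k * (kinv * h) = u' * (k * kinv) * v * g := by
      rw [hhdef]; group
    rw [← hu'def, hgr, hkk, mul_one, huv, one_mul]
  · rintro ⟨u, k, p, hk, ⟨z, hp⟩, rfl⟩
    obtain ⟨hk11, hk10⟩ := so2_entries k hk
    set a := (k : Matrix (Fin 2) (Fin 2) ℂ) 0 0 with ha
    set b := (k : Matrix (Fin 2) (Fin 2) ℂ) 0 1 with hb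
    have hdk := k.2
    rw [Matrix.det_fin_two] at hdk
    rw [hk11, hk10] at hdk
    have hab : (a - b * j) * (a + b * j) = 1 := by linear_combination hdk - b^2 * hj2
    have habne : a - b * j ≠ 0 := left_ne_zero_of_mul_eq_one hab
    -- entries of p evaluated on j
    have nump : (p : Matrix (Fin 2) (Fin 2) ℂ) 0 0 * j + (p : Matrix (Fin 2) (Fin 2) ℂ) 0 1 = j := by
      rw [hp]; simp; ring
    have denp : (p : Matrix (Fin 2) (Fin 2) ℂ) 1 0 * j + (p : Matrix (Fin 2) (Fin 2) ℂ) 1 1 = 1 := by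
      rw [hp]; simp; linear_combination -z * hj2
    -- entries of the mapped real matrix
    set U : Matrix (Fin 2) (Fin 2) ℂ :=
      ((Matrix.SpecialLinearGroup.map Complex.ofRealHom u : Matrix.SpecialLinearGroup (Fin 2) ℂ) :
        Matrix (Fin 2) (Fin 2) ℂ) with hU
    have hUe : ∀ i j' : Fin 2, U i j' = ((u : Matrix (Fin 2) (Fin 2) ℝ) i j' : ℂ) := by
      intro i j'; rfl
    set G : Matrix (Fin 2) (Fin 2) ℂ :=
      ((Matrix.SpecialLinearGroup.map Complex.ofRealHom u * k * p :
        Matrix.SpecialLinearGroup (Fin 2) ℂ) : Matrix (Fin 2) (Fin 2) ℂ) with hG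
    have hGm : G = U * ((k : Matrix (Fin 2) (Fin 2) ℂ) * (p : Matrix (Fin 2) (Fin 2) ℂ)) := by
      rw [hG, hU]; simp [Matrix.mul_assoc]
    have numkp : ((k : Matrix (Fin 2) (Fin 2) ℂ) * (p : Matrix (Fin 2) (Fin 2) ℂ)) 0 0 * j +
        ((k : Matrix (Fin 2) (Fin 2) ℂ) * (p : Matrix (Fin 2) (Fin 2) ℂ)) 0 1 = (a - b * j) * j := by
      rw [mobius_row, nump, denp]; linear_combination b * hj2
    have denkp : ((k : Matrix (Fin 2) (Fin 2) ℂ) * (p : Matrix (Fin 2) (Fin 2) ℂ)) 1 0 * j +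
        ((k : Matrix (Fin 2) (Fin 2) ℂ) * (p : Matrix (Fin 2) (Fin 2) ℂ)) 1 1 = a - b * j := by
      rw [mobius_row, nump, denp, hk10, hk11]; ring
    have numg : G 0 0 * j + G 0 1 = (a - b * j) * (U 0 0 * j + U 0 1) := by
      rw [hGm, mobius_row, numkp, denkp]; ring
    have deng : G 1 0 * j + G 1 1 = (a - b * j) * (U 1 0 * j + U 1 1) := by
      rw [hGm, mobius_row, numkp, denkp]; ring
    have hdu := u.2
    rw [Matrix.det_fin_two] at hdu
    have hDne : U 1 0 * j + U 1 1 ≠ 0 := by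
      intro h
      rw [hUe, hUe] at h
      have hre := congrArg Complex.re h
      have him := congrArg Complex.im h
      simp [Complex.mul_re, Complex.mul_im, hjre, hjimne] at hre him
      rw [him, hre] at hdu
      simp at hdu
    constructor
    · rw [deng]; exact mul_ne_zero habne hDne
    · rw [numg, deng, mul_div_mul_left _ _ habne]
      rw [hUe, hUe, hUe, hUe]
      rw [Complex.div_im]
      set u00 := (u : Matrix (Fin 2) (Fin 2) ℝ) 0 0
      set u01 := (u : Matrix (Fin 2) (Fin 2) ℝ) 0 1
      set u10 := (u : Matrix (Fin 2) (Fin 2) ℝ) 1 0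
      set u11 := (u : Matrix (Fin 2) (Fin 2) ℝ) 1 1
      have hnsq : 0 < Complex.normSq ((u10 : ℂ) * j + (u11 : ℂ)) := by
        rw [hUe, hUe] at hDne
        exact Complex.normSq_pos.mpr hDne
      have e1 : ((u00 : ℂ) * j + (u01 : ℂ)).im = u00 * j.im := by
        simp [Complex.mul_im, hjre]
      have e2 : ((u00 : ℂ) * j + (u01 : ℂ)).re = u01 := by
        simp [Complex.mul_re, hjre]
      have e3 : ((u10 : ℂ) * j + (u11 : ℂ)).im = u10 * j.im := by
        simp [Complex.mul_im, hjre]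
      have e4 : ((u10 : ℂ) * j + (u11 : ℂ)).re = u11 := by
        simp [Complex.mul_re, hjre]
      rw [e1, e2, e3, e4]
      have : ((u00 * j.im) * u11 / Complex.normSq ((u10 : ℂ) * j + (u11 : ℂ))
          - u01 * (u10 * j.im) / Complex.normSq ((u10 : ℂ) * j + (u11 : ℂ))) * j.im
          = (u00 * u11 - u01 * u10) * (j.im * j.im) / Complex.normSq ((u10 : ℂ) * j + (u11 : ℂ)) := by
        ring
      rw [this, hjim, hdu]
      positivity

/-- Structure of the preimages of the domains `Ξ⁺` and `Ξ⁻` in `SL(2,ℂ)`: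
`Ξ^± K_ℂ = G · K_ℂ · P^±`. -/
theorem XiPlusMinus_preimage_decomposition :
    ({g : Matrix.SpecialLinearGroup (Fin 2) ℂ |
        (g : Matrix (Fin 2) (Fin 2) ℂ) 1 0 * Complex.I +
            (g : Matrix (Fin 2) (Fin 2) ℂ) 1 1 ≠ 0 ∧
          0 < (((g : Matrix (Fin 2) (Fin 2) ℂ) 0 0 * Complex.I +
                  (g : Matrix (Fin 2) (Fin 2) ℂ) 0 1) /
                ((g : Matrix (Fin 2) (Fin 2) ℂ) 1 0 * Complex.I +
                  (g : Matrix (Fin 2) (Fin 2) ℂ) 1 1)).im} =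
      {g : Matrix.SpecialLinearGroup (Fin 2) ℂ |
        ∃ (u : Matrix.SpecialLinearGroup (Fin 2) ℝ)
          (k p : Matrix.SpecialLinearGroup (Fin 2) ℂ),
          (k : Matrix (Fin 2) (Fin 2) ℂ) * (k : Matrix (Fin 2) (Fin 2) ℂ)ᵀ = 1 ∧
          (∃ z : ℂ, (p : Matrix (Fin 2) (Fin 2) ℂ) =
            !![1 + z, -(Complex.I * z); -(Complex.I * z), 1 - z]) ∧
          g = Matrix.SpecialLinearGroup.map Complex.ofRealHom u * k * p}) ∧
    ({g : Matrix.SpecialLinearGroup (Fin 2) ℂ |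
        (g : Matrix (Fin 2) (Fin 2) ℂ) 1 0 * (-Complex.I) +
            (g : Matrix (Fin 2) (Fin 2) ℂ) 1 1 ≠ 0 ∧
          (((g : Matrix (Fin 2) (Fin 2) ℂ) 0 0 * (-Complex.I) +
                  (g : Matrix (Fin 2) (Fin 2) ℂ) 0 1) /
                ((g : Matrix (Fin 2) (Fin 2) ℂ) 1 0 * (-Complex.I) +
                  (g : Matrix (Fin 2) (Fin 2) ℂ) 1 1)).im < 0} =
      {g : Matrix.SpecialLinearGroup (Fin 2) ℂ |
        ∃ (u : Matrix.SpecialLinearGroup (Fin 2) ℝ)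
          (k p : Matrix.SpecialLinearGroup (Fin 2) ℂ),
          (k : Matrix (Fin 2) (Fin 2) ℂ) * (k : Matrix (Fin 2) (Fin 2) ℂ)ᵀ = 1 ∧
          (∃ z : ℂ, (p : Matrix (Fin 2) (Fin 2) ℂ) =
            !![1 + z, Complex.I * z; Complex.I * z, 1 - z]) ∧
          g = Matrix.SpecialLinearGroup.map Complex.ofRealHom u * k * p}) := by
  constructor
  · ext g
    simp only [Set.mem_setOf_eq]
    have h := master Complex.I (Or.inl rfl) g
    simpa [Complex.I_im] using h
  · ext g
    simp only [Set.mem_setOf_eq]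
    have h := master (-Complex.I) (Or.inr rfl) g
    simpa [Complex.neg_im, Complex.I_im, mul_neg_one, neg_mul, neg_neg, neg_pos] using h
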